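/- Neuberg's theorem on isotomic cevians. Let ABC be a nondegenerate triangle, and let P₁ ∈ line BC with P₁ ∉ {B, C}, P₂ ∈ line CA with P₂ ∉ {C, A}, P₃ ∈ line AB with P₃ ∉ {A, B}. Define the isotomic points Q₁ = B + C − P₁, Q₂ = C + A − P₂, Q₃ = A + B − P₃ (the reflections of P₁, P₂, P₃ in the midpoints of the respective sides). Suppose the lines AP₁, BP₂, CP₃ have a common point, and suppose the lines AQ₁ and BQ₂ are distinct and meet at a point X. Then X lies on line CQ₃. -/

import Mathlib

noncomputable section

private lemma mem_pair_iff {V : Type*} [AddCommGroup V] [Module ℝ V] {p p₁ p₂ : V} :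
    p ∈ line[ℝ, p₁, p₂] ↔ ∃ r : ℝ, r • (p₂ - p₁) + p₁ = p := by
  constructor
  · intro h
    have h2 : (p - p₁) +ᵥ p₁ ∈ line[ℝ, p₁, p₂] := by simpa using h
    obtain ⟨r, hr⟩ := vadd_left_mem_affineSpan_pair.mp h2
    exact ⟨r, by simpa [vsub_eq_sub] using congrArg (· + p₁) hr⟩
  · rintro ⟨r, rfl⟩
    simpa [vsub_eq_sub, vadd_eq_add] using smul_vsub_vadd_mem_affineSpan_pair r p₁ p₂

/-- Neuberg's theorem: the isotomic cevians of concurrent cevians are concurrent. -/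
theorem neuberg_isotomic
    (A B C P₁ P₂ P₃ X : EuclideanSpace ℝ (Fin 2))
    (hT : AffineIndependent ℝ ![A, B, C])
    (hP₁ : P₁ ∈ affineSpan ℝ {B, C}) (hP₁B : P₁ ≠ B) (hP₁C : P₁ ≠ C)
    (hP₂ : P₂ ∈ affineSpan ℝ {C, A}) (hP₂C : P₂ ≠ C) (hP₂A : P₂ ≠ A)
    (hP₃ : P₃ ∈ affineSpan ℝ {A, B}) (hP₃A : P₃ ≠ A) (hP₃B : P₃ ≠ B)
    (hconc : ∃ S, S ∈ affineSpan ℝ {A, P₁} ∧ S ∈ affineSpan ℝ {B, P₂} ∧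
      S ∈ affineSpan ℝ {C, P₃})
    (hne : affineSpan ℝ {A, B + C - P₁} ≠ affineSpan ℝ {B, C + A - P₂})
    (hX₁ : X ∈ affineSpan ℝ {A, B + C - P₁})
    (hX₂ : X ∈ affineSpan ℝ {B, C + A - P₂}) :
    X ∈ affineSpan ℝ {C, A + B - P₃} := by
  obtain ⟨t, ht⟩ := mem_pair_iff.mp hP₁
  obtain ⟨u, hu⟩ := mem_pair_iff.mp hP₂
  obtain ⟨v, hv⟩ := mem_pair_iff.mp hP₃
  obtain ⟨S, hS₁, hS₂, hS₃⟩ := hconc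
  obtain ⟨a, ha⟩ := mem_pair_iff.mp hS₁
  obtain ⟨b, hb⟩ := mem_pair_iff.mp hS₂
  obtain ⟨c, hc⟩ := mem_pair_iff.mp hS₃
  obtain ⟨p, hp⟩ := mem_pair_iff.mp hX₁
  obtain ⟨q, hq⟩ := mem_pair_iff.mp hX₂
  subst ht hu hv
  subst ha
  subst hp
  -- key independence fact
  have key : ∀ x y : ℝ, x • (B - A) + y • (C - A) = 0 → x = 0 ∧ y = 0 := by
    intro x y hxy
    have h := affineIndependent_iff.mp hT Finset.univ ![-x - y, x, y]
      (by simp [Fin.sum_univ_three]; ring)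
      (by
        simp only [Fin.sum_univ_three, Matrix.cons_val_zero, Matrix.cons_val_one,
          Matrix.head_cons, Matrix.cons_val_two, Matrix.tail_cons]
        linear_combination (norm := module) hxy)
    exact ⟨by simpa using h 1 (Finset.mem_univ 1), by simpa using h 2 (Finset.mem_univ 2)⟩
  -- scalar nondegeneracy
  have ht0 : t ≠ 0 := by rintro rfl; exact hP₁B (by simp)
  have ht1 : t ≠ 1 := by rintro rfl; apply hP₁C; module
  have hu0 : u ≠ 0 := by rintro rfl; exact hP₂C (by simp)
  have hu1 : u ≠ 1 := by rintro rfl; apply hP₂A; module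
  have hv0 : v ≠ 0 := by rintro rfl; exact hP₃A (by simp)
  have hv1 : v ≠ 1 := by rintro rfl; apply hP₃B; module
  -- scalar equations from concurrency
  have hE : (a * (1 - t) - (1 - b)) • (B - A) + (a * t - b * (1 - u)) • (C - A) = 0 := by
    linear_combination (norm := module) -hb
  obtain ⟨E1, E2⟩ := key _ _ hE
  have hF : (a * (1 - t) - c * v) • (B - A) + (a * t - (1 - c)) • (C - A) = 0 := by
    linear_combination (norm := module) -hc
  obtain ⟨E3, E4⟩ := key _ _ hF
  have hG : (p * t - (1 - q)) • (B - A) + (p * (1 - t) - q * u) • (C - A) = 0 := by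
    linear_combination (norm := module) -hq
  obtain ⟨F1, F2⟩ := key _ _ hG
  -- derive Ceva
  have ha0 : a ≠ 0 := by
    rintro rfl
    apply hu1
    have : (1 : ℝ) - u = 0 := by linear_combination -E2 - (1 - u) * E1
    linarith
  have hCeva : t * u * v = (1 - t) * (1 - u) * (1 - v) := by
    have h5 : a * (t * u * v - (1 - t) * (1 - u) * (1 - v)) = 0 := by
      linear_combination v * E2 + v * (1 - u) * E1 - (1 - u) * E3 - (1 - u) * v * E4
    have := mul_eq_zero.mp h5
    rcases this with h | h
    · exact absurd h ha0
    · linarith [h]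
  -- derive p relation
  have hP : p * (1 - t + t * u) = u := by linear_combination F2 + u * F1
  have hden : (1 : ℝ) - t + t * u ≠ 0 := by
    intro h
    apply hu0
    rw [← hP, h, mul_zero]
  have G1 : (1 - p * (1 - t)) * (1 - v) = p * t := by
    have hpv : p = u / (1 - t + t * u) := eq_div_of_mul_eq hden hP
    apply mul_left_cancel₀ hden
    linear_combination (-(1 - t) * (1 - v) - t) * hP - hCeva
  refine mem_pair_iff.mpr ⟨1 - p * (1 - t), ?_⟩
  match_scalars
  · linear_combination -G1
  · linear_combination G1
  · ring
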